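/- arXiv:2205.10671 — 2 statements merged into one kernel-verified Lean document; each statement's English description precedes it below -/
import Mathlib

section
/- Consider two two-armed Bernoulli bandit instances: Q₁ with behavior probabilities (1/2, 1/2) and reward means (1, 0), and Q₂ parameterized by behavior probability p for arm 1 and reward means (α, β). The squared Hellinger distance between the joint distributions of (action, reward) satisfies Hel²(Q₁, Q₂) = (1/2)[(1/√2 − √(pα))² + p(1−α) + (1−p)β + (1/√2 − √((1−p)(1−β)))²], and inf over p ∈ [0,1], α, β ∈ [0,1] with β > α of Hel²(Q₁, Q₂) equals 1 − 1/√2. -/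
/-- Squared Hellinger distance between distributions on a finite type. -/
noncomputable def sqHellingerFin {X : Type*} [Fintype X] (P Q : X → ℝ) : ℝ :=
  (1 / 2) * ∑ x, (Real.sqrt (P x) - Real.sqrt (Q x)) ^ 2

/-- Distribution of (arm, reward) for instance Q₁: arm uniform, reward 1 iff arm 1. -/
noncomputable def banditQ1 : Bool × Bool → ℝ :=
  fun p => if p.1 then (if p.2 then 1 / 2 else 0) else (if p.2 then 0 else 1 / 2)

/-- Distribution of (arm, reward) for instance Q₂ with behavior probability p of
arm 1 and reward means α (arm 1), β (arm 2). -/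
noncomputable def banditQ2 (p α β : ℝ) : Bool × Bool → ℝ :=
  fun x => if x.1 then (if x.2 then p * α else p * (1 - α))
           else (if x.2 then (1 - p) * β else (1 - p) * (1 - β))

lemma bandit_key (p α β : ℝ) (hp : p ∈ Set.Icc (0:ℝ) 1) (ha : α ∈ Set.Icc (0:ℝ) 1)
    (hb : β ∈ Set.Icc (0:ℝ) 1) :
    sqHellingerFin banditQ1 (banditQ2 p α β) =
      (1 / 2) * ((1 / Real.sqrt 2 - Real.sqrt (p * α)) ^ 2 + p * (1 - α) + (1 - p) * β +
        (1 / Real.sqrt 2 - Real.sqrt ((1 - p) * (1 - β))) ^ 2) := by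
  obtain ⟨hp0, hp1⟩ := hp
  obtain ⟨ha0, ha1⟩ := ha
  obtain ⟨hb0, hb1⟩ := hb
  have hs : Real.sqrt (1/2 : ℝ) = 1 / Real.sqrt 2 := by
    rw [one_div, one_div, ← Real.sqrt_inv]
  have h1 : Real.sqrt (p*(1-α)) ^ 2 = p*(1-α) := Real.sq_sqrt (by nlinarith)
  have h2 : Real.sqrt ((1-p)*β) ^ 2 = (1-p)*β := Real.sq_sqrt (by nlinarith)
  simp only [sqHellingerFin, banditQ1, banditQ2, Fintype.sum_prod_type, Fintype.sum_bool,
    if_true, if_false, Bool.cond_true, Bool.cond_false]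
  norm_num [hs]
  rw [h1, h2]
  ring

lemma bandit_val (p α β : ℝ) (hp : p ∈ Set.Icc (0:ℝ) 1) (ha : α ∈ Set.Icc (0:ℝ) 1)
    (hb : β ∈ Set.Icc (0:ℝ) 1) :
    sqHellingerFin banditQ1 (banditQ2 p α β) =
      1 - (Real.sqrt (p * α) + Real.sqrt ((1 - p) * (1 - β))) / Real.sqrt 2 := by
  obtain ⟨hp0, hp1⟩ := hp
  obtain ⟨ha0, ha1⟩ := ha
  obtain ⟨hb0, hb1⟩ := hb
  rw [bandit_key p α β ⟨hp0, hp1⟩ ⟨ha0, ha1⟩ ⟨hb0, hb1⟩]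
  have ha2 : Real.sqrt (p*α) ^ 2 = p*α := Real.sq_sqrt (by nlinarith)
  have hb2 : Real.sqrt ((1-p)*(1-β)) ^ 2 = (1-p)*(1-β) := Real.sq_sqrt (by nlinarith)
  have hs2 : Real.sqrt 2 ^ 2 = 2 := Real.sq_sqrt (by norm_num)
  have hspos : (0:ℝ) < Real.sqrt 2 := Real.sqrt_pos.mpr (by norm_num)
  set a := Real.sqrt (p*α)
  set b := Real.sqrt ((1-p)*(1-β))
  set s := Real.sqrt 2
  field_simp
  linear_combination (-1)*hs2 + s^2*ha2 + s^2*hb2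

lemma bandit_sum_le (p α β : ℝ) (hp : p ∈ Set.Icc (0:ℝ) 1) (ha : α ∈ Set.Icc (0:ℝ) 1)
    (hb : β ∈ Set.Icc (0:ℝ) 1) (hab : α ≤ β) :
    Real.sqrt (p * α) + Real.sqrt ((1 - p) * (1 - β)) ≤ 1 := by
  obtain ⟨hp0, hp1⟩ := hp
  obtain ⟨ha0, ha1⟩ := ha
  obtain ⟨hb0, hb1⟩ := hb
  have ha2 : Real.sqrt (p*α) ^ 2 = p*α := Real.sq_sqrt (by nlinarith)
  have hb2 : Real.sqrt ((1-p)*(1-β)) ^ 2 = (1-p)*(1-β) := Real.sq_sqrt (by nlinarith)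
  have han : 0 ≤ Real.sqrt (p*α) := Real.sqrt_nonneg _
  have hbn : 0 ≤ Real.sqrt ((1-p)*(1-β)) := Real.sqrt_nonneg _
  set a := Real.sqrt (p*α)
  set b := Real.sqrt ((1-p)*(1-β))
  have hab2 : (a*b)^2 = (p*α)*((1-p)*(1-β)) := by rw [mul_pow, ha2, hb2]
  have h2ab : 2*(a*b) ≤ p*(1-β) + (1-p)*α := by
    nlinarith [sq_nonneg (p*(1-β) - (1-p)*α), hab2, mul_nonneg han hbn,
      mul_nonneg hp0 (by linarith : (0:ℝ) ≤ 1-β), mul_nonneg (by linarith : (0:ℝ) ≤ 1-p) ha0]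
  nlinarith [h2ab, ha2, hb2, han, hbn, hab]

/-- Hellinger computation for the two-armed bandit counterexample, and the value
of the infimum over all alternative instances with β > α. -/
theorem bandit_hellinger :
    (∀ p α β : ℝ, p ∈ Set.Icc (0 : ℝ) 1 → α ∈ Set.Icc (0 : ℝ) 1 → β ∈ Set.Icc (0 : ℝ) 1 →
      sqHellingerFin banditQ1 (banditQ2 p α β) =
        (1 / 2) * ((1 / Real.sqrt 2 - Real.sqrt (p * α)) ^ 2 + p * (1 - α) + (1 - p) * β +
          (1 / Real.sqrt 2 - Real.sqrt ((1 - p) * (1 - β))) ^ 2)) ∧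
    sInf {h : ℝ | ∃ p α β : ℝ, p ∈ Set.Icc (0 : ℝ) 1 ∧ α ∈ Set.Icc (0 : ℝ) 1 ∧
        β ∈ Set.Icc (0 : ℝ) 1 ∧ α < β ∧ h = sqHellingerFin banditQ1 (banditQ2 p α β)} =
      1 - 1 / Real.sqrt 2 := by
  have hspos : (0:ℝ) < Real.sqrt 2 := Real.sqrt_pos.mpr (by norm_num)
  have h12 : (1:ℝ) ≤ Real.sqrt 2 := by
    rw [show (1:ℝ) = Real.sqrt 1 by simp]
    exact Real.sqrt_le_sqrt (by norm_num)
  set S := {h : ℝ | ∃ p α β : ℝ, p ∈ Set.Icc (0 : ℝ) 1 ∧ α ∈ Set.Icc (0 : ℝ) 1 ∧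
      β ∈ Set.Icc (0 : ℝ) 1 ∧ α < β ∧ h = sqHellingerFin banditQ1 (banditQ2 p α β)} with hS
  have hlow : ∀ h ∈ S, 1 - 1 / Real.sqrt 2 ≤ h := by
    rintro h ⟨p, α, β, hp, ha, hb, hab, rfl⟩
    rw [bandit_val p α β hp ha hb]
    have hsum := bandit_sum_le p α β hp ha hb hab.le
    have hdiv : (Real.sqrt (p*α) + Real.sqrt ((1-p)*(1-β))) / Real.sqrt 2 ≤ 1 / Real.sqrt 2 := by
      gcongr
    linarith
  have hbdd : BddBelow S := ⟨1 - 1 / Real.sqrt 2, hlow⟩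
  -- family of elements: for 0 < d ≤ 1/2, value 1 - (1-d)/√2 ∈ S
  have hmem : ∀ d : ℝ, 0 < d → d ≤ 1/2 → (1 - (1-d) / Real.sqrt 2) ∈ S := by
    intro d hd0 hd1
    refine ⟨1, (1-d)^2, 1, by norm_num, ⟨by positivity, by nlinarith⟩, by norm_num,
      by nlinarith, ?_⟩
    rw [bandit_val 1 ((1-d)^2) 1 (by norm_num) ⟨by positivity, by nlinarith⟩ (by norm_num)]
    rw [one_mul, Real.sqrt_sq (by linarith)]
    norm_num
  constructor
  · exact fun p α β hp ha hb => bandit_key p α β hp ha hb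
  · refine le_antisymm ?_ (le_csInf ⟨_, hmem (1/2) (by norm_num) (by norm_num)⟩ hlow)
    refine le_of_forall_pos_le_add fun ε hε => ?_
    have hd0 : 0 < min ε (1/2) := lt_min hε (by norm_num)
    have hd1 : min ε (1/2) ≤ 1/2 := min_le_right _ _
    have hle := csInf_le hbdd (hmem (min ε (1/2)) hd0 hd1)
    have hdd : min ε (1/2) / Real.sqrt 2 ≤ ε := le_trans (div_le_self hd0.le h12) (min_le_left _ _)
    have : 1 - (1 - min ε (1/2)) / Real.sqrt 2 = 1 - 1 / Real.sqrt 2 + min ε (1/2) / Real.sqrt 2 := by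
      field_simp
      ring
    linarith [hle, hdd, this ▸ hle]
end

section
/- Let μ be the distribution on A actions (A ≥ 8) with μ(a_k) = 2^{−k} for 1 ≤ k ≤ A−1 and μ(a_A) = 2^{−A+1}. Then for every integer n with 8 ≤ n ≤ 2^A, there exists an arm k with μ(a_k) ∈ [1/n, 2/n], and for such k, the probability that exactly one of n i.i.d. draws from μ equals a_k is at least (1 − 2/n)^{n−1} ≥ 0.1. -/
private lemma exp94' : Real.exp (9/4) < 10 := by
  have h4 : Real.exp (9/4) ^ (4:ℕ) = Real.exp 9 := by
    rw [← Real.exp_nat_mul]; norm_num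
  have h9 : Real.exp 9 = Real.exp 1 ^ (9:ℕ) := by
    rw [← Real.exp_nat_mul]; norm_num
  have he : Real.exp 1 < 2.7182818286 := Real.exp_one_lt_d9
  have h1 : Real.exp 1 ^ (9:ℕ) < 2.7182818286 ^ (9:ℕ) :=
    pow_lt_pow_left₀ he (Real.exp_pos 1).le (by norm_num)
  have h2 : (2.7182818286:ℝ) ^ (9:ℕ) < 10 ^ (4:ℕ) := by norm_num
  have h3 : Real.exp (9/4) ^ (4:ℕ) < 10 ^ (4:ℕ) := by
    rw [h4, h9]; linarith
  exact lt_of_pow_lt_pow_left₀ 4 (by norm_num) h3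

private lemma exp_le_one_sub' {x : ℝ} (hx0 : 0 ≤ x) (hx : x ≤ 1/4) :
    Real.exp (-(x + x^2)) ≤ 1 - x := by
  have ht0 : (0:ℝ) ≤ x + x^2 := by positivity
  have hq : (1 + (x + x^2)/2)^2 ≤ Real.exp (x + x^2) := by
    have hb := Real.add_one_le_exp ((x + x^2)/2)
    have h2 : Real.exp ((x+x^2)/2) ^ 2 = Real.exp (x+x^2) := by
      rw [← Real.exp_nat_mul]; ring_nf
    calc (1 + (x + x^2)/2)^2 ≤ Real.exp ((x+x^2)/2) ^ 2 := by
          apply pow_le_pow_left₀ (by positivity) (by linarith)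
      _ = _ := h2
  have key : 1 ≤ (1 - x) * Real.exp (x + x^2) := by
    have h1 : 1 ≤ (1-x) * (1 + (x + x^2)/2)^2 := by
      nlinarith [sq_nonneg x, sq_nonneg (x - 1/4), sq_nonneg (x*(x-1/4)), sq_nonneg (x*x)]
    have h2 : (1-x) * (1 + (x + x^2)/2)^2 ≤ (1-x) * Real.exp (x+x^2) := by
      apply mul_le_mul_of_nonneg_left hq (by linarith)
    linarith
  rw [Real.exp_neg, inv_le_iff_one_le_mul₀ (Real.exp_pos _)]
  nlinarith [Real.exp_pos (x+x^2)]

private lemma tenth_le_pow' (n : ℕ) (hn : 8 ≤ n) :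
    (0.1:ℝ) ≤ (1 - 2/(n:ℝ))^(n-1) := by
  have hn' : (8:ℝ) ≤ n := by exact_mod_cast hn
  have hnpos : (0:ℝ) < n := by linarith
  set x : ℝ := 2/n with hxdef
  have hx0 : 0 < x := by positivity
  have hx : x ≤ 1/4 := by rw [hxdef, div_le_div_iff₀ hnpos (by norm_num)]; linarith
  have hm : ((n-1 : ℕ) : ℝ) = (n:ℝ) - 1 := by
    have h1 : 1 ≤ n := by omega
    push_cast [Nat.cast_sub h1]; ring
  have h1 : Real.exp (-(x + x^2)) ^ (n-1) = Real.exp (((n-1:ℕ):ℝ) * (-(x+x^2))) := by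
    rw [← Real.exp_nat_mul]
  have h2 : (-(9/4) : ℝ) ≤ ((n-1:ℕ):ℝ) * (-(x+x^2)) := by
    rw [hm, hxdef]
    have e : ((n:ℝ)-1) * (2/n + (2/n)^2) = (((n:ℝ)-1)*(2*n+4))/n^2 := by
      field_simp; ring
    have h : ((n:ℝ)-1) * (2/n + (2/n)^2) ≤ 9/4 := by
      rw [e, div_le_iff₀ (by positivity)]
      nlinarith [sq_nonneg ((n:ℝ)-4)]
    nlinarith
  have h3 : (0.1:ℝ) ≤ Real.exp (-(9/4)) := by
    rw [Real.exp_neg, le_inv_comm₀ (by norm_num) (Real.exp_pos _)]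
    have := exp94'
    linarith
  calc (0.1:ℝ) ≤ Real.exp (-(9/4)) := h3
    _ ≤ Real.exp (((n-1:ℕ):ℝ) * (-(x+x^2))) := Real.exp_le_exp.mpr h2
    _ = Real.exp (-(x + x^2)) ^ (n-1) := h1.symm
    _ ≤ (1 - x) ^ (n-1) :=
        pow_le_pow_left₀ (Real.exp_pos _).le (exp_le_one_sub' hx0.le hx) _

/-- For the geometric behavior distribution μ(a_k) = 2^{−k} (k < A) with
μ(a_A) = 2^{−A+1}, every 8 ≤ n ≤ 2^A admits an arm with μ(a_k) ∈ [1/n, 2/n],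
and the probability of exactly one occurrence of that arm in n i.i.d. draws,
n·μ_k·(1−μ_k)^{n−1}, is at least (1 − 2/n)^{n−1} ≥ 0.1. -/
theorem exists_rare_arm (A : ℕ) (hA : 8 ≤ A)
    (μ : Fin A → ℝ)
    (hμ : μ = fun k : Fin A => if (k : ℕ) = A - 1 then (2 : ℝ) ^ (-(A : ℤ) + 1)
      else (2 : ℝ) ^ (-((k : ℕ) : ℤ) - 1))
    (n : ℕ) (hn8 : 8 ≤ n) (hn2 : n ≤ 2 ^ A) :
    ∃ k : Fin A, 1 / (n : ℝ) ≤ μ k ∧ μ k ≤ 2 / n ∧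
      (1 - 2 / (n : ℝ)) ^ (n - 1) ≤ n * μ k * (1 - μ k) ^ (n - 1) ∧
      (0.1 : ℝ) ≤ (1 - 2 / (n : ℝ)) ^ (n - 1) := by
  have hnpos : (0:ℝ) < n := by positivity
  -- find an arm with μ k ∈ [1/n, 2/n]
  obtain ⟨k, hk1, hk2⟩ :
      ∃ k : Fin A, 1 / (n : ℝ) ≤ μ k ∧ μ k ≤ 2 / n := by
    set L := Nat.log 2 n with hL
    have hL3 : 3 ≤ L := Nat.le_log_of_pow_le (by norm_num) (by omega)
    have hLA : L ≤ A := by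
      calc L ≤ Nat.log 2 (2^A) := Nat.log_mono_right hn2
        _ = A := Nat.log_pow (by norm_num) A
    have hlow : 2 ^ L ≤ n := Nat.pow_log_le_self 2 (by omega)
    have hhigh : n < 2 ^ (L + 1) := Nat.lt_pow_succ_log_self (by norm_num) n
    have hlowR : (2:ℝ)^L ≤ n := by exact_mod_cast hlow
    have hhighR : (n:ℝ) < 2^L * 2 := by
      have : (n:ℝ) < 2^(L+1) := by exact_mod_cast hhigh
      rwa [pow_succ] at this
    have h2Lpos : (0:ℝ) < 2^L := by positivity
    by_cases hcase : L < A
    · refine ⟨⟨L - 1, by omega⟩, ?_, ?_⟩ <;>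
        rw [show μ ⟨L-1, by omega⟩ = 1/(2:ℝ)^L by
          rw [hμ]
          simp only []
          rw [if_neg (by simpa using (by omega : L - 1 ≠ A - 1))]
          rw [show (-(((L-1:ℕ)):ℤ) - 1) = -(L:ℤ) by omega]
          rw [zpow_neg, ← zpow_natCast (2:ℝ) L, one_div]]
      · exact one_div_le_one_div_of_le h2Lpos hlowR
      · rw [div_le_div_iff₀ h2Lpos hnpos]; linarith
    · have hLA' : L = A := by omega
      have hnval : n = 2 ^ A := by
        have : 2 ^ A ≤ n := hLA' ▸ hlow
        omega
      have hval : μ ⟨A - 1, by omega⟩ = 2/(n:ℝ) := by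
        rw [hμ]
        simp only []
        rw [if_pos (by simp)]
        rw [show (-(A:ℤ) + 1) = 1 - (A:ℤ) by ring, zpow_sub₀ (by norm_num), zpow_one]
        have hnR : (n:ℝ) = 2 ^ (A:ℤ) := by rw [hnval]; push_cast; rw [zpow_natCast]
        rw [hnR]
      refine ⟨⟨A - 1, by omega⟩, ?_, hval.le⟩
      rw [hval, div_le_div_iff₀ hnpos hnpos]
      linarith
  refine ⟨k, hk1, hk2, ?_, tenth_le_pow' n hn8⟩
  have h8 : (8:ℝ) ≤ n := by exact_mod_cast hn8
  have hb0 : (0:ℝ) ≤ 1 - 2/n := by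
    rw [sub_nonneg, div_le_iff₀ hnpos]; linarith
  have hμk' : 1 ≤ (n:ℝ) * μ k := (div_le_iff₀' hnpos).mp hk1
  have hpow : (1 - 2/(n:ℝ))^(n-1) ≤ (1 - μ k)^(n-1) :=
    pow_le_pow_left₀ hb0 (by linarith) _
  calc (1 - 2/(n:ℝ))^(n-1) = 1 * (1 - 2/(n:ℝ))^(n-1) := (one_mul _).symm
    _ ≤ ((n:ℝ) * μ k) * (1 - μ k)^(n-1) := by
        apply mul_le_mul hμk' hpow (by positivity) (by nlinarith)
end
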